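/- Let n ≥ 1 and let T : ℝⁿ → ℝⁿ be monotone and additively homogeneous. Then the following are equivalent: (a) there is no pair (I, J) of disjoint subsets of {1,…,n} such that I is a MIN-dominion for T and J is a MAX-dominion for T; (b) every uniform perturbation G of T has an additive eigenvector, i.e., for every monotone additively homogeneous map G : ℝⁿ → ℝⁿ with sup_{x ∈ ℝⁿ} ‖G(x) − T(x)‖_H < ∞ there exist λ ∈ ℝ and u ∈ ℝⁿ with G(u) = λ·e + u. -/

import Mathlib

/-- `T` is additively homogeneous: `T(x + c·e) = T(x) + c·e`. -/
def AddHomog (n : ℕ) (T : (Fin n → ℝ) → (Fin n → ℝ)) : Prop :=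
  ∀ (x : Fin n → ℝ) (c : ℝ), T (fun i => x i + c) = fun i => T x i + c

/-- `Δ` is a MIN-dominion for `T`: there is `β` with `T_i(t·e_{Δᶜ}) ≤ β`
for all `i ∈ Δ` and all `t ≥ 0`. -/
def MinDominion (n : ℕ) (T : (Fin n → ℝ) → (Fin n → ℝ)) (Δ : Set (Fin n)) : Prop :=
  Δ.Nonempty ∧ ∃ β : ℝ, ∀ i ∈ Δ, ∀ t : ℝ, 0 ≤ t →
    T (Δᶜ.indicator fun _ => t) i ≤ β

/-- `Δ` is a MAX-dominion for `T`: there is `α` with `T_i(−t·e_{Δᶜ}) ≥ α`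
for all `i ∈ Δ` and all `t ≥ 0`. -/
def MaxDominion (n : ℕ) (T : (Fin n → ℝ) → (Fin n → ℝ)) (Δ : Set (Fin n)) : Prop :=
  Δ.Nonempty ∧ ∃ α : ℝ, ∀ i ∈ Δ, ∀ t : ℝ, 0 ≤ t →
    α ≤ T (Δᶜ.indicator fun _ => -t) i

/-- Hilbert's seminorm `‖x‖_H = max_i x_i − min_i x_i`. -/
noncomputable def hilbertSeminorm (n : ℕ) (x : Fin n → ℝ) : ℝ :=
  (⨆ i, x i) - ⨅ i, x i

/-- The additive slice space `A_α^β(T) = {x : α·e + x ≤ T(x) ≤ β·e + x}`. -/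
def addSliceSpace (n : ℕ) (T : (Fin n → ℝ) → (Fin n → ℝ)) (α β : ℝ) : Set (Fin n → ℝ) :=
  {x | ∀ i, α + x i ≤ T x i ∧ T x i ≤ β + x i}

section Helpers

variable {n : ℕ}

lemma bddA (f : Fin n → ℝ) : BddAbove (Set.range f) := (Set.finite_range f).bddAbove
lemma bddB (f : Fin n → ℝ) : BddBelow (Set.range f) := (Set.finite_range f).bddBelow

lemma shiftLe {T : (Fin n → ℝ) → (Fin n → ℝ)} (hmono : Monotone T) (hhom : AddHomog n T)
    {x y : Fin n → ℝ} {c : ℝ} (h : ∀ i, x i ≤ y i + c) (i : Fin n) :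
    T x i ≤ T y i + c := by
  have h2 : T x ≤ T (fun j => y j + c) := hmono (fun j => h j)
  have h3 := h2 i
  rw [hhom y c] at h3
  exact h3

lemma iterHomog {T : (Fin n → ℝ) → (Fin n → ℝ)} (hhom : AddHomog n T) (k : ℕ) :
    ∀ (x : Fin n → ℝ) (c : ℝ), T^[k] (fun i => x i + c) = fun i => T^[k] x i + c := by
  induction k with
  | zero => intro x c; simp
  | succ k ih =>
    intro x c
    rw [Function.iterate_succ_apply, Function.iterate_succ_apply, hhom x c, ih (T x) c]

end Helpers

lemma eig_of_bounded (n : ℕ) [Nonempty (Fin n)] (G : (Fin n → ℝ) → (Fin n → ℝ))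
    (hmono : Monotone G) (hhom : AddHomog n G) (R : ℝ)
    (hR : ∀ y ∈ addSliceSpace n G (⨅ i, G 0 i) (⨆ i, G 0 i), hilbertSeminorm n y ≤ R) :
    ∃ (lam : ℝ) (u : Fin n → ℝ), G u = fun i => lam + u i := by
  set α : ℝ := ⨅ i, G 0 i with hαdef
  set β : ℝ := ⨆ i, G 0 i with hβdef
  -- the orbit of 0 lies in the slice space
  have horb : ∀ k : ℕ, G^[k] 0 ∈ addSliceSpace n G α β := by
    intro k
    induction k with
    | zero =>
      intro i
      simp only [Function.iterate_zero_apply, Pi.zero_apply, add_zero]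
      exact ⟨ciInf_le (bddB _) i, le_ciSup (bddA _) i⟩
    | succ k ih =>
      intro i
      rw [Function.iterate_succ_apply']
      set x := G^[k] 0 with hx
      constructor
      · have h1 : ∀ j, x j + α ≤ G x j := by
          intro j; have := (ih j).1; linarith
        have h2 : G (fun j => x j + α) ≤ G (G x) := hmono h1
        have h3 := h2 i
        rw [hhom x α] at h3
        simpa [add_comm] using h3
      · have h1 : ∀ j, G x j ≤ x j + β := by
          intro j; have := (ih j).2; linarith
        have h2 : G (G x) ≤ G (fun j => x j + β) := hmono h1
        have h3 := h2 i
        rw [hhom x β] at h3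
        simpa [add_comm] using h3
  set a : ℕ → ℝ := fun k => ⨆ i, G^[k] 0 i with ha
  set b : ℕ → ℝ := fun k => ⨅ i, G^[k] 0 i with hb
  have hab : ∀ k, b k ≤ a k := fun k =>
    le_trans (ciInf_le (bddB _) (Classical.arbitrary _)) (le_ciSup (bddA _) _)
  have ha0 : a 0 = 0 := by simp [ha]
  have hb0 : b 0 = 0 := by simp [hb]
  have hsub : ∀ k m : ℕ, a (k + m) ≤ a k + a m := by
    intro k m
    have hpt : ∀ i, G^[m] 0 i ≤ (0 : Fin n → ℝ) i + a m := by
      intro i; simpa using le_ciSup (bddA (fun i => G^[m] 0 i)) i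
    have h2 : G^[k] (G^[m] 0) ≤ G^[k] (fun i => (0 : Fin n → ℝ) i + a m) :=
      (hmono.iterate k) hpt
    refine ciSup_le fun i => ?_
    have h3 := h2 i
    rw [iterHomog hhom k 0 (a m)] at h3
    rw [Function.iterate_add_apply]
    exact h3.trans (by have := le_ciSup (bddA (fun i => G^[k] 0 i)) i; exact add_le_add this le_rfl)
  have hsup : ∀ k m : ℕ, b k + b m ≤ b (k + m) := by
    intro k m
    have hpt : ∀ i, (fun i => (0 : Fin n → ℝ) i + b m) i ≤ G^[m] 0 i := by
      intro i; simpa using ciInf_le (bddB (fun i => G^[m] 0 i)) i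
    have h2 : G^[k] (fun i => (0 : Fin n → ℝ) i + b m) ≤ G^[k] (G^[m] 0) :=
      (hmono.iterate k) hpt
    refine le_ciInf fun i => ?_
    have h3 := h2 i
    rw [iterHomog hhom k 0 (b m)] at h3
    rw [Function.iterate_add_apply]
    refine le_trans ?_ h3
    have := ciInf_le (bddB (fun i => G^[k] 0 i)) i
    exact add_le_add this le_rfl
  -- multiplicative bounds
  have hbkm : ∀ k m : ℕ, (m : ℝ) * b k ≤ b (k * m) := by
    intro k m
    induction m with
    | zero => simp [hb0]
    | succ m ih =>
      have h1 := hsup (k * m) k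
      have : (k * m + k) = k * (m + 1) := by ring
      rw [this] at h1
      push_cast
      nlinarith
  have hakm : ∀ k m : ℕ, a (k * m) ≤ (m : ℝ) * a k := by
    intro k m
    induction m with
    | zero => simp [ha0]
    | succ m ih =>
      have h1 := hsub (k * m) k
      have : (k * m + k) = k * (m + 1) := by ring
      rw [this] at h1
      push_cast
      nlinarith
  have key : ∀ k m : ℕ, b (k + 1) / (k + 1 : ℝ) ≤ a (m + 1) / (m + 1 : ℝ) := by
    intro k m
    have h1 := hbkm (k + 1) (m + 1)
    have h2 := hakm (m + 1) (k + 1)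
    have h3 : b ((k + 1) * (m + 1)) ≤ a ((k + 1) * (m + 1)) := hab _
    rw [show (k + 1) * (m + 1) = (m + 1) * (k + 1) by ring] at h1 h3
    have hk : (0 : ℝ) < (k : ℝ) + 1 := by positivity
    have hm : (0 : ℝ) < (m : ℝ) + 1 := by positivity
    rw [div_le_div_iff₀ hk hm]
    push_cast at h1 h2 ⊢
    nlinarith
  have hbddlam : BddBelow (Set.range fun k : ℕ => a (k + 1) / ((k : ℝ) + 1)) := by
    refine ⟨b 1, ?_⟩
    rintro _ ⟨m, rfl⟩
    have := key 0 m
    simpa using this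
  set lam : ℝ := ⨅ k : ℕ, a (k + 1) / ((k : ℝ) + 1) with hlamdef
  have hak : ∀ k : ℕ, (k : ℝ) * lam ≤ a k := by
    intro k
    cases k with
    | zero => simp [ha0]
    | succ k =>
      have h1 : lam ≤ a (k + 1) / ((k : ℝ) + 1) := ciInf_le hbddlam k
      have hk : (0 : ℝ) < (k : ℝ) + 1 := by positivity
      rw [le_div_iff₀ hk] at h1
      push_cast
      nlinarith
  have hbk : ∀ k : ℕ, b k ≤ (k : ℝ) * lam := by
    intro k
    cases k with
    | zero => simp [hb0]
    | succ k =>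
      have h1 : b (k + 1) / ((k : ℝ) + 1) ≤ lam := le_ciInf fun m => key k m
      have hk : (0 : ℝ) < (k : ℝ) + 1 := by positivity
      rw [div_le_iff₀ hk] at h1
      push_cast
      nlinarith
  have hosc : ∀ k : ℕ, a k - b k ≤ R := by
    intro k
    have := hR _ (horb k)
    simpa [hilbertSeminorm, ha, hb] using this
  set y : ℕ → Fin n → ℝ := fun k i => G^[k] 0 i - (k : ℝ) * lam with hy
  have hyub : ∀ k i, y k i ≤ R := by
    intro k i
    have h1 : G^[k] 0 i ≤ a k := le_ciSup (bddA _) i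
    have h2 := hbk k
    have h3 := hosc k
    simp only [hy]
    linarith
  have hylb : ∀ k i, -R ≤ y k i := by
    intro k i
    have h1 : b k ≤ G^[k] 0 i := ciInf_le (bddB _) i
    have h2 := hak k
    have h3 := hosc k
    simp only [hy]
    linarith
  have hybA : ∀ m i, BddAbove (Set.range fun k : ℕ => y (m + k) i) := by
    intro m i
    exact ⟨R, by rintro _ ⟨k, rfl⟩; exact hyub _ i⟩
  set v : ℕ → Fin n → ℝ := fun m i => ⨆ k : ℕ, y (m + k) i with hv
  have hvub : ∀ m i, v m i ≤ R := fun m i => ciSup_le fun k => hyub _ i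
  have hvlb : ∀ m i, -R ≤ v m i := fun m i => le_trans (hylb m i)
    (by simpa using le_ciSup (hybA m i) 0)
  have hvanti : ∀ m i, v (m + 1) i ≤ v m i := by
    intro m i
    refine ciSup_le fun k => ?_
    have h := le_ciSup (hybA m i) (k + 1)
    rw [show m + (k + 1) = m + 1 + k by omega] at h
    exact h
  have hvmono : ∀ i, Antitone (fun m => v m i) :=
    fun i => antitone_nat_of_succ_le (fun m => hvanti m i)
  set u : Fin n → ℝ := fun i => ⨅ m : ℕ, v m i with hu
  have hubd : ∀ i, BddBelow (Set.range fun m : ℕ => v m i) :=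
    fun i => ⟨-R, by rintro _ ⟨m, rfl⟩; exact hvlb m i⟩
  have huv : ∀ m i, u i ≤ v m i := fun m i => ciInf_le (hubd i) m
  -- G (y (m+k)) i = y (m+k+1) i + lam
  have hGy : ∀ N i, G (y N) i = y (N + 1) i + lam := by
    intro N i
    have hyN : y N = fun j => G^[N] 0 j + (-((N : ℝ) * lam)) := by
      funext j; simp [hy, sub_eq_add_neg]
    rw [hyN, hhom (G^[N] 0) (-((N : ℝ) * lam))]
    simp only [hy]
    rw [Function.iterate_succ_apply']
    push_cast
    ring
  have hstep : ∀ m i, v (m + 1) i ≤ G (v m) i - lam := by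
    intro m i
    refine ciSup_le fun k => ?_
    have hle : ∀ j, y (m + k) j ≤ v m j := fun j => le_ciSup (hybA m j) k
    have h2 : G (y (m + k)) i ≤ G (v m) i := hmono hle i
    have h3 := hGy (m + k) i
    rw [show m + 1 + k = m + k + 1 by omega]
    linarith
  have hufix : ∀ i, u i ≤ G u i - lam := by
    intro i
    rw [sub_eq_add_neg, ← sub_le_iff_le_add]
    refine le_of_forall_pos_le_add fun ε hε => ?_
    have hch : ∀ j, ∃ m : ℕ, v m j < u j + ε := by
      intro j
      refine exists_lt_of_ciInf_lt ?_
      simp only [hu]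
      linarith [ciInf_le (hubd j) 0]
    choose mf hmf using hch
    set m₀ : ℕ := Finset.univ.sup mf with hm₀
    have hvu : ∀ j, v m₀ j ≤ u j + ε := by
      intro j
      have : mf j ≤ m₀ := Finset.le_sup (Finset.mem_univ j)
      exact le_trans (hvmono j this) (le_of_lt (hmf j))
    have h1 : u i ≤ v (m₀ + 1) i := huv _ i
    have h2 := hstep m₀ i
    have h3 := shiftLe hmono hhom hvu i
    linarith
  -- iterate F = G - lam starting from u; increasing and bounded
  set F : (Fin n → ℝ) → (Fin n → ℝ) := fun w => fun i => G w i - lam with hF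
  have hFmono : Monotone F := by
    intro p q h i
    simp only [hF]
    exact sub_le_sub_right (hmono h i) lam
  set z : ℕ → Fin n → ℝ := fun k => F^[k] u with hz
  have hzsucc : ∀ k, z (k + 1) = F (z k) := by
    intro k; simp only [hz]; rw [Function.iterate_succ_apply']
  have hzmono : ∀ k, ∀ i, z k i ≤ z (k + 1) i := by
    intro k
    induction k with
    | zero =>
      intro i
      have := hufix i
      simp only [hz, Function.iterate_zero_apply, Function.iterate_one]
      simpa [hF] using this
    | succ k ih =>
      intro i
      have ih' : z k ≤ F (z k) := by intro j; rw [← hzsucc k]; exact ih j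
      rw [hzsucc (k + 1), hzsucc k]
      exact hFmono ih' i
  have hzmono' : ∀ i, Monotone (fun k => z k i) :=
    fun i => monotone_nat_of_le_succ (fun k => hzmono k i)
  set su : ℝ := ⨆ j, u j with hsu
  have hzy : ∀ k i, z k i ≤ y k i + su := by
    intro k
    induction k with
    | zero =>
      intro i
      have h1 : u i ≤ su := le_ciSup (bddA u) i
      simp only [hz, hy, Function.iterate_zero_apply]
      simpa using h1
    | succ k ih =>
      intro i
      rw [hzsucc k]
      have h2 : G (z k) i ≤ G (y k) i + su := shiftLe hmono hhom ih i
      have h3 := hGy k i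
      simp only [hF]
      linarith
  have hzub : ∀ k i, z k i ≤ R + su := fun k i => le_trans (hzy k i)
    (by have := hyub k i; linarith)
  have hzbA : ∀ i, BddAbove (Set.range fun k : ℕ => z k i) :=
    fun i => ⟨R + su, by rintro _ ⟨k, rfl⟩; exact hzub k i⟩
  set zl : Fin n → ℝ := fun i => ⨆ k : ℕ, z k i with hzl
  have hzle : ∀ k i, z k i ≤ zl i := fun k i => le_ciSup (hzbA i) k
  have hlow : ∀ i, zl i ≤ G zl i - lam := by
    intro i
    refine ciSup_le fun k => ?_
    have h1 : z k i ≤ z (k + 1) i := hzmono k i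
    have h2 : z (k + 1) i = G (z k) i - lam := by rw [hzsucc k]
    have h3 : G (z k) i ≤ G zl i := hmono (fun j => hzle k j) i
    linarith
  have hupp : ∀ i, G zl i ≤ zl i + lam := by
    intro i
    refine le_of_forall_pos_le_add fun ε hε => ?_
    have hch : ∀ j, ∃ k : ℕ, zl j - ε < z k j := by
      intro j
      exact exists_lt_of_lt_ciSup (show zl j - ε < ⨆ k, z k j from sub_lt_self _ hε)
    choose kf hkf using hch
    set k₀ : ℕ := Finset.univ.sup kf with hk₀
    have hzlz : ∀ j, zl j ≤ z k₀ j + ε := by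
      intro j
      have h1 : kf j ≤ k₀ := Finset.le_sup (Finset.mem_univ j)
      have h2 := hzmono' j h1
      have h3 := hkf j
      linarith
    have h1 := shiftLe hmono hhom hzlz i
    have h2 : z (k₀ + 1) i = G (z k₀) i - lam := by rw [hzsucc k₀]
    have h3 := hzle (k₀ + 1) i
    linarith
  refine ⟨lam, zl, funext fun i => ?_⟩
  have h1 := hlow i
  have h2 := hupp i
  linarith

lemma dominions_of_unbounded (n : ℕ) [Nonempty (Fin n)] (T : (Fin n → ℝ) → (Fin n → ℝ))
    (hmono : Monotone T) (hhom : AddHomog n T) (a b : ℝ) (x : ℕ → Fin n → ℝ)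
    (hsl : ∀ k, x k ∈ addSliceSpace n T a b)
    (hnn : ∀ k i, 0 ≤ x k i)
    (hmin : ∀ k, ∃ i, x k i = 0)
    (hbig : ∀ k : ℕ, (k : ℝ) ≤ ⨆ i, x k i) :
    ∃ I J : Set (Fin n), Disjoint I J ∧ MinDominion n T I ∧ MaxDominion n T J := by
  classical
  set M : ℕ → ℝ := fun k => ⨆ i, x k i with hM
  have hxleM : ∀ k i, x k i ≤ M k := fun k i => le_ciSup (bddA _) i
  have hMx : ∀ k i, 0 ≤ M k - x k i := fun k i => by linarith [hxleM k i]
  -- map into the compact cube [0,1]^(Fin n × Bool)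
  set q : ℕ → (Fin n × Bool → ℝ) := fun k p =>
    if p.2 then x k p.1 / (1 + x k p.1) else (M k - x k p.1) / (1 + (M k - x k p.1)) with hq
  have hratio : ∀ t : ℝ, 0 ≤ t → 0 ≤ t / (1 + t) ∧ t / (1 + t) ≤ 1 := by
    intro t ht
    constructor
    · positivity
    · rw [div_le_one (by linarith)]; linarith
  have hq01 : ∀ k, q k ∈ Set.Icc (0 : Fin n × Bool → ℝ) 1 := by
    intro k
    rw [Set.mem_Icc]
    constructor <;> intro p <;> simp only [hq, Pi.zero_apply, Pi.one_apply]
    · rcases p with ⟨i, _ | _⟩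
      · simpa using (hratio _ (hMx k i)).1
      · simpa using (hratio _ (hnn k i)).1
    · rcases p with ⟨i, _ | _⟩
      · simpa using (hratio _ (hMx k i)).2
      · simpa using (hratio _ (hnn k i)).2
  obtain ⟨L, hL, φ, hφ, hconv⟩ :=
    (isCompact_Icc : IsCompact (Set.Icc (0 : Fin n × Bool → ℝ) 1)).tendsto_subseq hq01
  rw [Set.mem_Icc] at hL
  have hL0 : ∀ p, 0 ≤ L p := fun p => hL.1 p
  have hL1 : ∀ p, L p ≤ 1 := fun p => hL.2 p
  set z : Fin n → ℝ := fun i => L (i, true) with hz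
  set v : Fin n → ℝ := fun i => L (i, false) with hv
  have htz : ∀ i, Filter.Tendsto (fun k => x (φ k) i / (1 + x (φ k) i))
      Filter.atTop (nhds (z i)) := by
    intro i
    have := (tendsto_pi_nhds.mp hconv) (i, true)
    simpa [hq, Function.comp] using this
  have htv : ∀ i, Filter.Tendsto (fun k => (M (φ k) - x (φ k) i) / (1 + (M (φ k) - x (φ k) i)))
      Filter.atTop (nhds (v i)) := by
    intro i
    have := (tendsto_pi_nhds.mp hconv) (i, false)
    simpa [hq, Function.comp] using this
  have hMφ : ∀ k : ℕ, (k : ℝ) ≤ M (φ k) := by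
    intro k
    calc (k : ℝ) ≤ (φ k : ℝ) := by exact_mod_cast hφ.le_apply
    _ ≤ M (φ k) := hbig (φ k)
  -- thresholds
  set Dz : Fin n → ℝ := fun i => ((z i + 1) / 2) / (1 - (z i + 1) / 2) with hDz
  set Dv : Fin n → ℝ := fun i => ((v i + 1) / 2) / (1 - (v i + 1) / 2) with hDv
  -- generic facts about ratio limits
  have fact_bdd : ∀ (s : ℕ → ℝ) (c : ℝ), (∀ k, 0 ≤ s k) →
      Filter.Tendsto (fun k => s k / (1 + s k)) Filter.atTop (nhds c) → c < 1 →
      ∀ᶠ k in Filter.atTop, s k ≤ ((c + 1) / 2) / (1 - (c + 1) / 2) := by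
    intro s c hs hts hc
    have hq1 : c < (c + 1) / 2 := by linarith
    have hev := hts.eventually_lt_const hq1
    filter_upwards [hev] with k hk
    have h1 : 0 < 1 + s k := by linarith [hs k]
    rw [div_lt_iff₀ h1] at hk
    have h2 : 0 < 1 - (c + 1) / 2 := by linarith
    rw [le_div_iff₀ h2]
    nlinarith
  have fact_top : ∀ (s : ℕ → ℝ) (c : ℝ), (∀ k, 0 ≤ s k) →
      Filter.Tendsto (fun k => s k / (1 + s k)) Filter.atTop (nhds c) → ¬ c < 1 →
      ∀ t : ℝ, 0 ≤ t → ∀ᶠ k in Filter.atTop, t ≤ s k := by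
    intro s c hs hts hc t ht
    have hc1 : c = 1 := by
      have : c ≤ 1 := by
        -- limit of values ≤ 1
        have hcl : ∀ᶠ k in Filter.atTop, s k / (1 + s k) ∈ Set.Iic (1:ℝ) := by
          filter_upwards with k
          exact (hratio _ (hs k)).2
        exact (isClosed_Iic.mem_of_frequently_of_tendsto hcl.frequently hts)
      linarith [not_lt.mp hc]
    have hq1 : t / (1 + t) < c := by
      rw [hc1, div_lt_one (by linarith)]; linarith
    have hev := hts.eventually_const_lt hq1
    filter_upwards [hev] with k hk
    have h1 : 0 < 1 + s k := by linarith [hs k]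
    have h2 : 0 < 1 + t := by linarith
    rw [div_lt_div_iff₀ h2 h1] at hk
    nlinarith
  have factz_bdd : ∀ i, z i < 1 → ∀ᶠ k in Filter.atTop, x (φ k) i ≤ Dz i :=
    fun i hi => fact_bdd (fun k => x (φ k) i) (z i) (fun k => hnn _ i) (htz i) hi
  have factz_top : ∀ i, ¬ z i < 1 → ∀ t : ℝ, 0 ≤ t → ∀ᶠ k in Filter.atTop, t ≤ x (φ k) i :=
    fun i hi => fact_top (fun k => x (φ k) i) (z i) (fun k => hnn _ i) (htz i) hi
  have factv_bdd : ∀ i, v i < 1 → ∀ᶠ k in Filter.atTop, M (φ k) - x (φ k) i ≤ Dv i :=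
    fun i hi => fact_bdd (fun k => M (φ k) - x (φ k) i) (v i) (fun k => hMx _ i) (htv i) hi
  have factv_top : ∀ i, ¬ v i < 1 → ∀ t : ℝ, 0 ≤ t →
      ∀ᶠ k in Filter.atTop, t ≤ M (φ k) - x (φ k) i :=
    fun i hi => fact_top (fun k => M (φ k) - x (φ k) i) (v i) (fun k => hMx _ i) (htv i) hi
  set I : Set (Fin n) := {i | z i < 1} with hI
  set J : Set (Fin n) := {i | v i < 1} with hJ
  -- disjointness
  have hdisj : Disjoint I J := by
    rw [Set.disjoint_left]
    intro i hiI hiJ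
    have h1 := factz_bdd i hiI
    have h2 := factv_bdd i hiJ
    have h3 : ∀ᶠ k : ℕ in Filter.atTop, Dz i + Dv i + 1 ≤ (k : ℝ) := by
      have := tendsto_natCast_atTop_atTop (R := ℝ)
      exact this.eventually_ge_atTop _
    obtain ⟨k, hk1, hk2, hk3⟩ := (h1.and (h2.and h3)).exists
    have := hMφ k
    linarith
  -- pigeonhole : some coordinate attains min infinitely often
  have hpigeon : ∀ (P : ℕ → Fin n → Prop), (∀ k, ∃ i, P k i) →
      ∃ i, ∀ N : ℕ, ∃ k, N ≤ k ∧ P k i := by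
    intro P hP
    by_contra hcon
    push_neg at hcon
    choose Nf hNf using hcon
    set N₀ : ℕ := Finset.univ.sup Nf with hN₀
    obtain ⟨i, hi⟩ := hP N₀
    exact hNf i N₀ (Finset.le_sup (Finset.mem_univ i)) hi
  have hIne : I.Nonempty := by
    obtain ⟨i, hi⟩ := hpigeon (fun k j => x (φ k) j = 0) (fun k => hmin (φ k))
    refine ⟨i, ?_⟩
    have hfreq : ∃ᶠ k in Filter.atTop, x (φ k) i / (1 + x (φ k) i) ∈ ({0} : Set ℝ) := by
      rw [Filter.frequently_atTop]
      intro N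
      obtain ⟨k, hk1, hk2⟩ := hi N
      exact ⟨k, hk1, by simp [hk2]⟩
    have : z i ∈ ({0} : Set ℝ) :=
      isClosed_singleton.mem_of_frequently_of_tendsto hfreq (htz i)
    simp only [Set.mem_singleton_iff] at this
    show z i < 1
    rw [this]; norm_num
  have hJne : J.Nonempty := by
    have hargmax : ∀ k, ∃ i, M k - x k i = 0 := by
      intro k
      obtain ⟨i, hi⟩ := Finite.exists_max (x k)
      have : M k = x k i := le_antisymm (ciSup_le hi) (le_ciSup (bddA _) i)
      exact ⟨i, by linarith⟩
    obtain ⟨i, hi⟩ := hpigeon (fun k j => M (φ k) - x (φ k) j = 0) (fun k => hargmax (φ k))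
    refine ⟨i, ?_⟩
    have hfreq : ∃ᶠ k in Filter.atTop,
        (M (φ k) - x (φ k) i) / (1 + (M (φ k) - x (φ k) i)) ∈ ({0} : Set ℝ) := by
      rw [Filter.frequently_atTop]
      intro N
      obtain ⟨k, hk1, hk2⟩ := hi N
      exact ⟨k, hk1, by simp [hk2]⟩
    have : v i ∈ ({0} : Set ℝ) :=
      isClosed_singleton.mem_of_frequently_of_tendsto hfreq (htv i)
    simp only [Set.mem_singleton_iff] at this
    show v i < 1
    rw [this]; norm_num
  -- uniform constants
  set C1 : ℝ := ∑ j : Fin n, max (Dz j) 0 with hC1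
  set C2 : ℝ := ∑ j : Fin n, max (Dv j) 0 with hC2
  have hDzC1 : ∀ i, Dz i ≤ C1 := by
    intro i
    calc Dz i ≤ max (Dz i) 0 := le_max_left _ _
    _ ≤ C1 := Finset.single_le_sum (f := fun j => max (Dz j) 0)
        (fun j _ => le_max_right _ _) (Finset.mem_univ i)
  have hDvC2 : ∀ i, Dv i ≤ C2 := by
    intro i
    calc Dv i ≤ max (Dv i) 0 := le_max_left _ _
    _ ≤ C2 := Finset.single_le_sum (f := fun j => max (Dv j) 0)
        (fun j _ => le_max_right _ _) (Finset.mem_univ i)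
  refine ⟨I, J, hdisj, ⟨hIne, b + C1, ?_⟩, ⟨hJne, a - C2, ?_⟩⟩
  · -- MIN dominion
    intro i hi t ht
    have hev : ∀ᶠ k in Filter.atTop, ∀ j : Fin n,
        (z j < 1 → x (φ k) j ≤ Dz j) ∧ (¬ z j < 1 → t ≤ x (φ k) j) := by
      rw [Filter.eventually_all]
      intro j
      by_cases h : z j < 1
      · exact (factz_bdd j h).mono (fun k hk => ⟨fun _ => hk, fun h' => absurd h h'⟩)
      · exact (factz_top j h t ht).mono (fun k hk => ⟨fun h' => absurd h' h, fun _ => hk⟩)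
    obtain ⟨k, hk⟩ := hev.exists
    have hle : (Iᶜ.indicator fun _ => t) ≤ x (φ k) := by
      intro j
      by_cases hj : j ∈ I
      · rw [Set.indicator_of_notMem (by simpa using hj)]
        exact hnn _ j
      · rw [Set.indicator_of_mem (by simpa using hj)]
        exact (hk j).2 hj
    calc T (Iᶜ.indicator fun _ => t) i ≤ T (x (φ k)) i := hmono hle i
    _ ≤ b + x (φ k) i := (hsl (φ k) i).2
    _ ≤ b + C1 := by
        have h1 : x (φ k) i ≤ Dz i := (hk i).1 hi
        linarith [hDzC1 i]
  · -- MAX dominion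
    intro j hj t ht
    have hev : ∀ᶠ k in Filter.atTop, ∀ l : Fin n,
        (v l < 1 → M (φ k) - x (φ k) l ≤ Dv l) ∧ (¬ v l < 1 → t ≤ M (φ k) - x (φ k) l) := by
      rw [Filter.eventually_all]
      intro l
      by_cases h : v l < 1
      · exact (factv_bdd l h).mono (fun k hk => ⟨fun _ => hk, fun h' => absurd h h'⟩)
      · exact (factv_top l h t ht).mono (fun k hk => ⟨fun h' => absurd h' h, fun _ => hk⟩)
    obtain ⟨k, hk⟩ := hev.exists
    have hle : (fun l => x (φ k) l + (-(M (φ k)))) ≤ (Jᶜ.indicator fun _ => -t) := by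
      intro l
      show x (φ k) l + (-(M (φ k))) ≤ (Jᶜ.indicator fun _ => -t) l
      by_cases hl : l ∈ J
      · rw [Set.indicator_of_notMem (by simpa using hl)]
        linarith [hxleM (φ k) l]
      · rw [Set.indicator_of_mem (by simpa using hl)]
        have := (hk l).2 hl
        linarith
    have h1 : T (fun l => x (φ k) l + (-(M (φ k)))) ≤ T (Jᶜ.indicator fun _ => -t) := hmono hle
    have h2 := h1 j
    rw [hhom (x (φ k)) (-(M (φ k)))] at h2
    have h3 : a + x (φ k) j ≤ T (x (φ k)) j := (hsl (φ k) j).1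
    have h4 : M (φ k) - x (φ k) j ≤ Dv j := (hk j).1 hj
    simp only at h2
    linarith [hDvC2 j]

lemma transfer (n : ℕ) [Nonempty (Fin n)] (T G : (Fin n → ℝ) → (Fin n → ℝ))
    (hTmono : Monotone T) (hThom : AddHomog n T) (M α β : ℝ)
    (hM : ∀ w, hilbertSeminorm n (G w - T w) ≤ M)
    (x : Fin n → ℝ) (hx : x ∈ addSliceSpace n G α β)
    (hnn : ∀ i, 0 ≤ x i) (h0 : ∃ i, x i = 0) :
    x ∈ addSliceSpace n T ((⨅ i, T 0 i) - ((β - α) + M)) ((⨆ i, T 0 i) + ((β - α) + M)) := by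
  set d : Fin n → ℝ := fun i => G x i - T x i with hd
  have hdM : ∀ i, d i ≤ (⨅ j, d j) + M := by
    intro i
    have h1 := hM x
    have h2 : hilbertSeminorm n (G x - T x) = (⨆ j, d j) - ⨅ j, d j := by
      simp [hilbertSeminorm, hd]
    rw [h2] at h1
    have h3 : d i ≤ ⨆ j, d j := le_ciSup (bddA d) i
    linarith
  set c : ℝ := ⨅ j, d j with hc
  have hcle : ∀ i, c ≤ d i := fun i => ciInf_le (bddB d) i
  have hTlow : ∀ i, (α - c - M) + x i ≤ T x i := by
    intro i
    have h1 := (hx i).1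
    have h2 := hdM i
    have h3 : T x i = G x i - d i := by simp [hd]
    linarith
  have hThigh : ∀ i, T x i ≤ (β - c) + x i := by
    intro i
    have h1 := (hx i).2
    have h2 := hcle i
    have h3 : T x i = G x i - d i := by simp [hd]
    linarith
  obtain ⟨i0, hi0⟩ := h0
  have h1 : (⨅ j, T 0 j) ≤ β - c := by
    have ha1 : T 0 ≤ T x := hTmono (fun j => hnn j)
    have ha2 : (⨅ j, T 0 j) ≤ T 0 i0 := ciInf_le (bddB _) i0
    have ha3 := hThigh i0
    rw [hi0] at ha3
    linarith [ha1 i0]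
  obtain ⟨i1, hi1⟩ := Finite.exists_max x
  have h2 : α - c - M ≤ ⨆ j, T 0 j := by
    have hb1 : T x ≤ T (fun j => (0 : Fin n → ℝ) j + x i1) :=
      hTmono (fun j => by simpa using hi1 j)
    have hb2 := hb1 i1
    rw [hThom 0 (x i1)] at hb2
    have hb3 : T 0 i1 ≤ ⨆ j, T 0 j := le_ciSup (bddA _) i1
    have hb4 := hTlow i1
    simp only at hb2
    linarith
  intro i
  constructor
  · have := hTlow i; linarith
  · have := hThigh i; linarith

theorem stmt5 (n : ℕ) (hn : 1 ≤ n)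
    (T : (Fin n → ℝ) → (Fin n → ℝ))
    (hmono : Monotone T) (hhom : AddHomog n T) :
    (¬ ∃ I J : Set (Fin n),
        Disjoint I J ∧ MinDominion n T I ∧ MaxDominion n T J) ↔
    (∀ G : (Fin n → ℝ) → (Fin n → ℝ), Monotone G → AddHomog n G →
        (∃ M : ℝ, ∀ x : Fin n → ℝ, hilbertSeminorm n (G x - T x) ≤ M) →
        ∃ (lam : ℝ) (u : Fin n → ℝ), G u = fun i => lam + u i) := by
  haveI : Nonempty (Fin n) := ⟨⟨0, hn⟩⟩
  classical
  constructor
  · -- no disjoint dominions → every perturbation has an eigenvector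
    intro ha G hGmono hGhom hMex
    obtain ⟨M, hM⟩ := hMex
    set α : ℝ := ⨅ i, G 0 i with hα
    set β : ℝ := ⨆ i, G 0 i with hβ
    set W : ℝ := (β - α) + M with hW
    have hbdd : ∃ R : ℝ, ∀ y ∈ addSliceSpace n G α β, hilbertSeminorm n y ≤ R := by
      by_contra hcon
      push_neg at hcon
      choose Y hY1 hY2 using fun k : ℕ => hcon (k : ℝ)
      set x : ℕ → Fin n → ℝ := fun k i => Y k i - ⨅ j, Y k j with hx
      have hnn : ∀ k i, 0 ≤ x k i := by
        intro k i
        have := ciInf_le (bddB (Y k)) i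
        simp only [hx]
        linarith
      have hmin : ∀ k, ∃ i, x k i = 0 := by
        intro k
        obtain ⟨i, hi⟩ := Finite.exists_min (Y k)
        refine ⟨i, ?_⟩
        have : (⨅ j, Y k j) = Y k i := le_antisymm (ciInf_le (bddB _) i) (le_ciInf hi)
        simp [hx, this]
      have hsupx : ∀ k, (⨆ i, x k i) = hilbertSeminorm n (Y k) := by
        intro k
        have h1 : ∀ i, x k i = Y k i + (-(⨅ j, Y k j)) := by
          intro i; simp [hx, sub_eq_add_neg]
        have h2 : (⨆ i, x k i) = ⨆ i, (Y k i + (-(⨅ j, Y k j))) := iSup_congr h1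
        rw [h2, ← ciSup_add (bddA (Y k)) (-(⨅ j, Y k j))]
        simp only [hilbertSeminorm]
        ring
      have hbig : ∀ k : ℕ, (k : ℝ) ≤ ⨆ i, x k i := by
        intro k
        rw [hsupx k]
        linarith [hY2 k]
      -- x k still in G-slice (shift invariance)
      have hslG : ∀ k, x k ∈ addSliceSpace n G α β := by
        intro k
        intro i
        have hk := hY1 k i
        set c : ℝ := -(⨅ j, Y k j) with hc
        have hx' : x k = fun i => Y k i + c := by
          funext i; simp [hx, hc, sub_eq_add_neg]
        rw [hx', hGhom (Y k) c]
        constructor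
        · have := hk.1; simp only; linarith
        · have := hk.2; simp only; linarith
      have hslT : ∀ k, x k ∈ addSliceSpace n T ((⨅ i, T 0 i) - W) ((⨆ i, T 0 i) + W) :=
        fun k => transfer n T G hmono hhom M α β hM (x k) (hslG k) (hnn k) (hmin k)
      exact ha (dominions_of_unbounded n T hmono hhom _ _ x hslT hnn hmin hbig)
    obtain ⟨R, hR⟩ := hbdd
    exact eig_of_bounded n G hGmono hGhom R hR
  · -- contrapositive: disjoint dominions → a perturbation without eigenvector
    intro hb
    rintro ⟨I, J, hIJ, ⟨hIne, β₀, hβ⟩, ⟨hJne, α₀, hα⟩⟩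
    set s : ℝ := |β₀ - α₀| + 1 with hs
    have hspos : 0 < s := by positivity
    set w : Fin n → ℝ := fun i => (J.indicator (fun _ => s) i) - (I.indicator (fun _ => s) i)
      with hw
    have hwle : ∀ i, -s ≤ w i ∧ w i ≤ s := by
      intro i
      have hJ' : (0:ℝ) ≤ J.indicator (fun _ => s) i ∧ J.indicator (fun _ => s) i ≤ s := by
        by_cases h : i ∈ J
        · rw [Set.indicator_of_mem h]; exact ⟨hspos.le, le_rfl⟩
        · rw [Set.indicator_of_notMem h]; exact ⟨le_rfl, hspos.le⟩
      have hI' : (0:ℝ) ≤ I.indicator (fun _ => s) i ∧ I.indicator (fun _ => s) i ≤ s := by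
        by_cases h : i ∈ I
        · rw [Set.indicator_of_mem h]; exact ⟨hspos.le, le_rfl⟩
        · rw [Set.indicator_of_notMem h]; exact ⟨le_rfl, hspos.le⟩
      constructor <;> simp only [hw] <;> linarith [hJ'.1, hJ'.2, hI'.1, hI'.2]
    set G : (Fin n → ℝ) → (Fin n → ℝ) := fun p => fun i => T p i + w i with hG
    have hGmono : Monotone G := by
      intro p q hpq i
      simp only [hG]
      exact add_le_add (hmono hpq i) le_rfl
    have hGhom : AddHomog n G := by
      intro p c
      funext i
      simp only [hG]
      rw [hhom p c]
      ring
    have hGM : ∀ p, hilbertSeminorm n (G p - T p) ≤ 2 * s := by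
      intro p
      have h1 : (G p - T p) = w := by
        funext i; simp [hG]
      rw [h1, hilbertSeminorm]
      have h2 : (⨆ i, w i) ≤ s := ciSup_le fun i => (hwle i).2
      have h3 : -s ≤ ⨅ i, w i := le_ciInf fun i => (hwle i).1
      linarith
    obtain ⟨lam, u, hu⟩ := hb G hGmono hGhom ⟨2 * s, hGM⟩
    have heq : ∀ i, T u i + w i = lam + u i := fun i => congrFun hu i
    -- MIN side
    haveI : Nonempty ↥I := hIne.to_subtype
    haveI : Nonempty ↥J := hJne.to_subtype
    set cI : ℝ := ⨆ i : ↥I, u i with hcI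
    have hbI : BddAbove (Set.range fun i : ↥I => u i) := (Set.finite_range _).bddAbove
    set tI : ℝ := max ((⨆ j, u j) - cI) 0 with htIdef
    have htI : 0 ≤ tI := le_max_right _ _
    have hcomp : ∀ j, u j ≤ (Iᶜ.indicator fun _ => tI) j + cI := by
      intro j
      by_cases hj : j ∈ I
      · rw [Set.indicator_of_notMem (by simpa using hj)]
        have : u j ≤ cI := le_ciSup hbI ⟨j, hj⟩
        linarith
      · rw [Set.indicator_of_mem (by simpa using hj)]
        have h1 : u j ≤ ⨆ j, u j := le_ciSup (bddA u) j
        have h2 : (⨆ j, u j) - cI ≤ tI := le_max_left _ _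
        linarith
    have hTub : ∀ i, i ∈ I → lam + s + u i ≤ β₀ + cI := by
      intro i hi
      have h1 : T u ≤ T (fun j => (Iᶜ.indicator fun _ => tI) j + cI) := hmono hcomp
      have h2 := h1 i
      rw [hhom _ cI] at h2
      simp only at h2
      have h3 := hβ i hi tI htI
      have h4 := heq i
      have h5 : w i = -s := by
        have hiJ : i ∉ J := Set.disjoint_left.mp hIJ hi
        simp [hw, Set.indicator_of_mem hi, Set.indicator_of_notMem hiJ]
      rw [h5] at h4
      linarith
    have hlamub : lam + s ≤ β₀ := by
      have h1 : ∀ i : ↥I, u i ≤ β₀ + cI - lam - s := by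
        intro i
        have := hTub i i.2
        linarith
      have h2 : cI ≤ β₀ + cI - lam - s := ciSup_le h1
      linarith
    -- MAX side
    set cJ : ℝ := ⨅ j : ↥J, u j with hcJ
    have hbJ : BddBelow (Set.range fun j : ↥J => u j) := (Set.finite_range _).bddBelow
    set tJ : ℝ := max (cJ - ⨅ j, u j) 0 with htJdef
    have htJ : 0 ≤ tJ := le_max_right _ _
    have hcomp2 : ∀ l, (Jᶜ.indicator fun _ => -tJ) l + cJ ≤ u l := by
      intro l
      by_cases hl : l ∈ J
      · rw [Set.indicator_of_notMem (by simpa using hl)]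
        have : cJ ≤ u l := ciInf_le hbJ ⟨l, hl⟩
        linarith
      · rw [Set.indicator_of_mem (by simpa using hl)]
        have h1 : (⨅ j, u j) ≤ u l := ciInf_le (bddB u) l
        have h2 : cJ - (⨅ j, u j) ≤ tJ := le_max_left _ _
        linarith
    have hTlb : ∀ j, j ∈ J → α₀ + cJ ≤ lam - s + u j := by
      intro j hj
      have h1 : T (fun l => (Jᶜ.indicator fun _ => -tJ) l + cJ) ≤ T u := hmono hcomp2
      have h2 := h1 j
      rw [hhom _ cJ] at h2
      simp only at h2
      have h3 := hα j hj tJ htJ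
      have h4 := heq j
      have h5 : w j = s := by
        have hjI : j ∉ I := Set.disjoint_right.mp hIJ hj
        simp [hw, Set.indicator_of_mem hj, Set.indicator_of_notMem hjI]
      rw [h5] at h4
      linarith
    have hlamlb : α₀ + s ≤ lam := by
      have h1 : ∀ j : ↥J, α₀ + cJ - lam + s ≤ u j := by
        intro j
        have := hTlb j j.2
        linarith
      have h2 : α₀ + cJ - lam + s ≤ cJ := le_ciInf h1
      linarith
    have habs : β₀ - α₀ ≤ |β₀ - α₀| := le_abs_self _
    linarith
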